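/- Let d ∈ ℕ, 0 < α < min(d,2), p > 2, β ≥ 0, and μ > max(β, (d−α)/p). Then the double integral ∫_{|x|≥1} ∫_{|y|≥1} | |x|^{β−μ} − |y|^{β−μ} | · | |x|^{β−(p−1)μ} − |y|^{β−(p−1)μ} | · |x|^{−β} |y|^{−β} ν(x,y) dy dx is finite. -/
import Mathlib


open MeasureTheory Real Filter Topology
open scoped ENNReal NNReal

noncomputable section

/-- The signed power `a^⟨k⟩ := |a|^k sgn a` (with `0^k := 0`). -/
def sgnPow (a k : ℝ) : ℝ := |a| ^ k * Real.sign a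

/-- The Bregman divergence `F_p(a,b) := |b|^p - |a|^p - p a^⟨p-1⟩ (b-a)`. -/
def bregmanF (p a b : ℝ) : ℝ := |b| ^ p - |a| ^ p - p * sgnPow a (p - 1) * (b - a)

/-- The constant `A_{d,-α} = 2^α Γ((d+α)/2) π^{-d/2} / |Γ(-α/2)|`. -/
def coefA (d : ℕ) (α : ℝ) : ℝ :=
  2 ^ α * Real.Gamma (((d : ℝ) + α) / 2) * Real.pi ^ (-(d : ℝ) / 2) / |Real.Gamma (-α / 2)|

/-- The kernel `ν(x,y) = A_{d,-α} |x-y|^{-d-α}` of the fractional Laplacian. -/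
def nuK (d : ℕ) (α : ℝ) (x y : EuclideanSpace ℝ (Fin d)) : ℝ :=
  coefA d α * ‖x - y‖ ^ (-(d : ℝ) - α)

/-- The Hardy constant `κ_β`.  Note that `Real.Gamma 0 = 0` and division by `0` is `0`
in Lean, so this formula automatically gives `κ_0 = 0` and `κ_{d-α} = 0`. -/
def kappaC (d : ℕ) (α β : ℝ) : ℝ :=
  2 ^ α * Real.Gamma ((β + α) / 2) * Real.Gamma (((d : ℝ) - β) / 2) /
    (Real.Gamma (β / 2) * Real.Gamma (((d : ℝ) - β - α) / 2))

/-- The Sobolev–Bregman form `E_p[u]`, an element of `[0,∞]`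
(the integrand is nonnegative). -/
def formEp (d : ℕ) (α p : ℝ) (u : EuclideanSpace ℝ (Fin d) → ℝ) : ℝ≥0∞ :=
  (1 / 2) * ∫⁻ x, ∫⁻ y, ENNReal.ofReal
    ((u x - u y) * (sgnPow (u x) (p - 1) - sgnPow (u y) (p - 1)) * nuK d α x y)

/-- The Hardy integral `∫ |u(x)|^p |x|^{-α} dx`, an element of `[0,∞]`. -/
def hardyI (d : ℕ) (α p : ℝ) (u : EuclideanSpace ℝ (Fin d) → ℝ) : ℝ≥0∞ :=
  ∫⁻ x, ENNReal.ofReal (|u x| ^ p * ‖x‖ ^ (-α))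

end

namespace AuxHardy
open Set Metric

variable {d : ℕ}

noncomputable def Hf (d : ℕ) (α : ℝ) (w : EuclideanSpace ℝ (Fin d)) : ℝ :=
  min 1 ‖w‖ ^ (2:ℝ) * ‖w‖ ^ (-(d:ℝ) - α)

noncomputable def auxK (d : ℕ) (α q a r : ℝ) : ℝ :=
  a ^ (-q) * min 1 (r / a) ^ (2:ℝ) * r ^ (-(d:ℝ) - α)

lemma setEq (d : ℕ) :
    {x : EuclideanSpace ℝ (Fin d) | 1 ≤ ‖x‖} = (Metric.ball (0 : EuclideanSpace ℝ (Fin d)) 1)ᶜ := by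
  ext x
  simp [Metric.mem_ball, dist_zero_right, not_lt]

lemma near (hd : 0 < d) {s : ℝ} (hs : -(d : ℝ) < s) :
    ∫⁻ x : EuclideanSpace ℝ (Fin d) in Metric.ball 0 1, ENNReal.ofReal (‖x‖ ^ s) < ⊤ := by
  haveI : Nonempty (Fin d) := ⟨⟨0, hd⟩⟩
  rcases le_or_gt 0 s with h0 | h0
  · calc ∫⁻ x : EuclideanSpace ℝ (Fin d) in Metric.ball 0 1, ENNReal.ofReal (‖x‖ ^ s)
        ≤ ∫⁻ _ : EuclideanSpace ℝ (Fin d) in Metric.ball 0 1, 1 := by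
          refine setLIntegral_mono measurable_const fun x hx => ?_
          have hx1 : ‖x‖ ≤ 1 := by
            have := mem_ball_zero_iff.mp hx
            linarith
          simpa using ENNReal.ofReal_le_one.mpr (Real.rpow_le_one (norm_nonneg x) hx1 h0)
      _ = volume (Metric.ball (0 : EuclideanSpace ℝ (Fin d)) 1) := setLIntegral_one _
      _ < ⊤ := measure_ball_lt_top
  · set ν := volume.restrict (Metric.ball (0 : EuclideanSpace ℝ (Fin d)) 1) with hν
    have hmeas : AEMeasurable (fun x : EuclideanSpace ℝ (Fin d) => ‖x‖ ^ s) ν := by fun_prop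
    rw [lintegral_eq_lintegral_meas_le ν
      (Eventually.of_forall fun x => Real.rpow_nonneg (norm_nonneg x) s) hmeas]
    have hd' : s⁻¹ * d < -1 := by
      have hsinv : s⁻¹ < 0 := inv_neg''.mpr h0
      have h1 : s * s⁻¹ = 1 := mul_inv_cancel₀ (ne_of_lt h0)
      nlinarith
    have key : ∀ t ∈ Ioi (1 : ℝ), ν {a : EuclideanSpace ℝ (Fin d) | t ≤ ‖a‖ ^ s}
        ≤ ENNReal.ofReal (t ^ (s⁻¹ * d)) *
          volume (Metric.ball (0 : EuclideanSpace ℝ (Fin d)) 1) := by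
      intro t ht
      have ht0 : (0 : ℝ) < t := lt_trans one_pos ht
      have hsub : {a : EuclideanSpace ℝ (Fin d) | t ≤ ‖a‖ ^ s}
          ⊆ Metric.closedBall 0 (t ^ s⁻¹) := by
        intro a ha
        have hane : a ≠ 0 := by
          rintro rfl
          simp only [mem_setOf_eq, norm_zero] at ha
          rw [Real.zero_rpow (ne_of_lt h0)] at ha
          linarith
        have hnorm : 0 < ‖a‖ := norm_pos_iff.mpr hane
        have := (Real.le_rpow_inv_iff_of_neg hnorm ht0 h0).mpr ha
        simpa [mem_closedBall_zero_iff] using this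
      calc ν {a : EuclideanSpace ℝ (Fin d) | t ≤ ‖a‖ ^ s}
          ≤ volume {a : EuclideanSpace ℝ (Fin d) | t ≤ ‖a‖ ^ s} :=
            Measure.restrict_le_self _
        _ ≤ volume (Metric.closedBall (0 : EuclideanSpace ℝ (Fin d)) (t ^ s⁻¹)) :=
            measure_mono hsub
        _ = ENNReal.ofReal ((t ^ s⁻¹) ^ Module.finrank ℝ (EuclideanSpace ℝ (Fin d))) *
            volume (Metric.ball (0 : EuclideanSpace ℝ (Fin d)) 1) :=
            Measure.addHaar_closedBall volume 0 (Real.rpow_nonneg ht0.le _)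
        _ = ENNReal.ofReal (t ^ (s⁻¹ * d)) *
            volume (Metric.ball (0 : EuclideanSpace ℝ (Fin d)) 1) := by
            rw [finrank_euclideanSpace, Fintype.card_fin, ← Real.rpow_natCast (t ^ s⁻¹) d,
              ← Real.rpow_mul ht0.le]
    calc ∫⁻ t in Ioi (0:ℝ), ν {a : EuclideanSpace ℝ (Fin d) | t ≤ ‖a‖ ^ s}
        ≤ ∫⁻ t in Ioc (0:ℝ) 1 ∪ Ioi 1, ν {a : EuclideanSpace ℝ (Fin d) | t ≤ ‖a‖ ^ s} :=
          lintegral_mono_set Ioi_subset_Ioc_union_Ioi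
      _ ≤ (∫⁻ t in Ioc (0:ℝ) 1, ν {a : EuclideanSpace ℝ (Fin d) | t ≤ ‖a‖ ^ s}) +
          ∫⁻ t in Ioi (1:ℝ), ν {a : EuclideanSpace ℝ (Fin d) | t ≤ ‖a‖ ^ s} :=
          lintegral_union_le _ _ _
      _ < ⊤ := by
          refine ENNReal.add_lt_top.2 ⟨?_, ?_⟩
          · calc (∫⁻ t in Ioc (0:ℝ) 1, ν {a : EuclideanSpace ℝ (Fin d) | t ≤ ‖a‖ ^ s})
                ≤ ∫⁻ _ in Ioc (0:ℝ) 1, volume (Metric.ball (0 : EuclideanSpace ℝ (Fin d)) 1) := by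
                  refine setLIntegral_mono measurable_const fun t _ => ?_
                  calc ν {a : EuclideanSpace ℝ (Fin d) | t ≤ ‖a‖ ^ s} ≤ ν univ :=
                        measure_mono (subset_univ _)
                    _ ≤ volume (Metric.ball (0 : EuclideanSpace ℝ (Fin d)) 1) := by
                        rw [hν, Measure.restrict_apply_univ]
              _ = volume (Metric.ball (0 : EuclideanSpace ℝ (Fin d)) 1) * volume (Ioc (0:ℝ) 1) :=
                  setLIntegral_const _ _
              _ < ⊤ := ENNReal.mul_lt_top measure_ball_lt_top (by simp)
          · calc (∫⁻ t in Ioi (1:ℝ), ν {a : EuclideanSpace ℝ (Fin d) | t ≤ ‖a‖ ^ s})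
                ≤ ∫⁻ t in Ioi (1:ℝ), ENNReal.ofReal (t ^ (s⁻¹ * d)) *
                    volume (Metric.ball (0 : EuclideanSpace ℝ (Fin d)) 1) := by
                  refine setLIntegral_mono (by fun_prop) key
              _ = (∫⁻ t in Ioi (1:ℝ), ENNReal.ofReal (t ^ (s⁻¹ * d))) *
                  volume (Metric.ball (0 : EuclideanSpace ℝ (Fin d)) 1) :=
                  lintegral_mul_const' _ _ measure_ball_lt_top.ne
              _ < ⊤ := by
                  refine ENNReal.mul_lt_top ?_ measure_ball_lt_top
                  exact (integrableOn_Ioi_rpow_of_lt hd' one_pos).lintegral_lt_top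

lemma far (hd : 0 < d) {s : ℝ} (hs : s < -(d : ℝ)) :
    ∫⁻ x : EuclideanSpace ℝ (Fin d) in (Metric.ball (0 : EuclideanSpace ℝ (Fin d)) 1)ᶜ,
      ENNReal.ofReal (‖x‖ ^ s) < ⊤ := by
  have hs0 : s < 0 := by
    have : (0:ℝ) < d := by exact_mod_cast hd
    linarith
  have h2 : ∀ x : EuclideanSpace ℝ (Fin d), x ∈ (Metric.ball (0 : EuclideanSpace ℝ (Fin d)) 1)ᶜ →
      ENNReal.ofReal (‖x‖ ^ s) ≤ ENNReal.ofReal ((2:ℝ) ^ (-s) * (1 + ‖x‖) ^ s) := by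
    intro x hx
    have hx1 : (1:ℝ) ≤ ‖x‖ := by
      simpa [Metric.mem_ball, dist_zero_right, not_lt] using hx
    have hx0 : (0:ℝ) < ‖x‖ := lt_of_lt_of_le one_pos hx1
    refine ENNReal.ofReal_le_ofReal ?_
    have h3 : (1 + ‖x‖) ≤ 2 * ‖x‖ := by linarith
    have h4 : (2 * ‖x‖) ^ s ≤ (1 + ‖x‖) ^ s :=
      Real.rpow_le_rpow_of_nonpos (by linarith) h3 hs0.le
    have h5 : (2 * ‖x‖) ^ s = (2:ℝ) ^ s * ‖x‖ ^ s :=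
      Real.mul_rpow (by norm_num) hx0.le
    have h6 : (2:ℝ) ^ (-s) * ((2:ℝ) ^ s * ‖x‖ ^ s) = ‖x‖ ^ s := by
      rw [← mul_assoc, ← Real.rpow_add (by norm_num)]
      simp
    calc ‖x‖ ^ s = (2:ℝ) ^ (-s) * ((2:ℝ) ^ s * ‖x‖ ^ s) := h6.symm
      _ = (2:ℝ) ^ (-s) * (2 * ‖x‖) ^ s := by rw [h5]
      _ ≤ (2:ℝ) ^ (-s) * (1 + ‖x‖) ^ s := by
          have : (0:ℝ) ≤ (2:ℝ) ^ (-s) := Real.rpow_nonneg (by norm_num) _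
          nlinarith
  calc ∫⁻ x : EuclideanSpace ℝ (Fin d) in (Metric.ball (0 : EuclideanSpace ℝ (Fin d)) 1)ᶜ,
        ENNReal.ofReal (‖x‖ ^ s)
      ≤ ∫⁻ x : EuclideanSpace ℝ (Fin d) in (Metric.ball (0 : EuclideanSpace ℝ (Fin d)) 1)ᶜ,
        ENNReal.ofReal ((2:ℝ) ^ (-s) * (1 + ‖x‖) ^ s) := setLIntegral_mono (by fun_prop) h2
    _ ≤ ∫⁻ x : EuclideanSpace ℝ (Fin d), ENNReal.ofReal ((2:ℝ) ^ (-s) * (1 + ‖x‖) ^ s) :=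
        setLIntegral_le_lintegral _ _
    _ < ⊤ := by
        have hint : Integrable (fun x : EuclideanSpace ℝ (Fin d) =>
            (2:ℝ) ^ (-s) * (1 + ‖x‖) ^ (-(-s))) volume := by
          refine ((integrable_one_add_norm (μ := volume) (r := -s)) ?_).const_mul _
          rw [finrank_euclideanSpace, Fintype.card_fin]
          linarith
        simpa using hint.lintegral_lt_top


lemma measurable_Hf {α : ℝ} : Measurable fun w : EuclideanSpace ℝ (Fin d) => Hf d α w := by
  simp only [Hf]; fun_prop

lemma radial_lt_top (hd : 0 < d) {α : ℝ} (hα0 : 0 < α) (hα2 : α < 2) :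
    ∫⁻ w : EuclideanSpace ℝ (Fin d), ENNReal.ofReal (Hf d α w) < ⊤ := by
  rw [← lintegral_add_compl (fun w => ENNReal.ofReal (Hf d α w))
    (measurableSet_ball (x := (0 : EuclideanSpace ℝ (Fin d))) (ε := 1))]
  refine ENNReal.add_lt_top.2 ⟨?_, ?_⟩
  · calc ∫⁻ w : EuclideanSpace ℝ (Fin d) in Metric.ball 0 1, ENNReal.ofReal (Hf d α w)
        ≤ ∫⁻ w : EuclideanSpace ℝ (Fin d) in Metric.ball 0 1,
          ENNReal.ofReal (‖w‖ ^ ((2:ℝ) + (-(d:ℝ) - α))) := by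
          refine setLIntegral_mono (by fun_prop) fun w hw => ?_
          have hw1 : ‖w‖ < 1 := mem_ball_zero_iff.mp hw
          refine ENNReal.ofReal_le_ofReal ?_
          rcases eq_or_lt_of_le (norm_nonneg w) with h0 | h0
          · simp only [Hf, ← h0, min_eq_right (by norm_num : (0:ℝ) ≤ 1)]
            rw [Real.zero_rpow (by norm_num : (2:ℝ) ≠ 0), zero_mul]
            exact Real.rpow_nonneg le_rfl _
          · simp only [Hf, min_eq_right hw1.le]
            rw [← Real.rpow_add h0]
      _ < ⊤ := near hd (by push_cast; linarith)
  · calc ∫⁻ w : EuclideanSpace ℝ (Fin d) in (Metric.ball (0:EuclideanSpace ℝ (Fin d)) 1)ᶜ,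
          ENNReal.ofReal (Hf d α w)
        ≤ ∫⁻ w : EuclideanSpace ℝ (Fin d) in (Metric.ball (0:EuclideanSpace ℝ (Fin d)) 1)ᶜ,
          ENNReal.ofReal (‖w‖ ^ (-(d:ℝ) - α)) := by
          refine setLIntegral_mono (by fun_prop) fun w hw => ?_
          have hw1 : (1:ℝ) ≤ ‖w‖ := by
            simpa [Metric.mem_ball, dist_zero_right, not_lt] using hw
          refine ENNReal.ofReal_le_ofReal ?_
          simp only [Hf, min_eq_left hw1, Real.one_rpow, one_mul, le_refl]
      _ < ⊤ := far hd (by linarith)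

lemma mvt_bound {e m a b : ℝ} (he : 0 < e) (hm : 0 < m) (ha : m ≤ a) (hb : m ≤ b) :
    |a ^ (-e) - b ^ (-e)| ≤ e * m ^ (-e - 1) * |a - b| := by
  have key := Convex.norm_image_sub_le_of_norm_hasDerivWithin_le
    (f := fun t : ℝ => t ^ (-e)) (f' := fun t : ℝ => (-e) * t ^ (-e - 1)) (s := Ici m)
    (C := e * m ^ (-e - 1)) (fun x hx => ?_) (fun x hx => ?_) (convex_Ici m) hb ha
  · simpa [Real.norm_eq_abs] using key
  · have hx0 : x ≠ 0 := ne_of_gt (lt_of_lt_of_le hm hx)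
    exact (Real.hasDerivAt_rpow_const (Or.inl hx0)).hasDerivWithinAt
  · have hx0 : m ≤ x := hx
    have h1 : x ^ (-e - 1) ≤ m ^ (-e - 1) :=
      Real.rpow_le_rpow_of_nonpos hm hx0 (by linarith)
    have h2 : (0:ℝ) ≤ x ^ (-e - 1) := Real.rpow_nonneg (le_trans hm.le hx0) _
    rw [Real.norm_eq_abs, abs_mul, abs_neg, abs_of_pos he, abs_of_nonneg h2]
    exact mul_le_mul_of_nonneg_left h1 he.le

lemma triv_bound {e m a b : ℝ} (he : 0 < e) (hm : 0 < m) (ha : m ≤ a) (hb : m ≤ b) :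
    |a ^ (-e) - b ^ (-e)| ≤ m ^ (-e) := by
  have h1 : a ^ (-e) ≤ m ^ (-e) := Real.rpow_le_rpow_of_nonpos hm ha (by linarith)
  have h2 : b ^ (-e) ≤ m ^ (-e) := Real.rpow_le_rpow_of_nonpos hm hb (by linarith)
  have h3 : (0:ℝ) ≤ a ^ (-e) := Real.rpow_nonneg (le_trans hm.le ha) _
  have h4 : (0:ℝ) ≤ b ^ (-e) := Real.rpow_nonneg (le_trans hm.le hb) _
  rw [abs_sub_le_iff]
  constructor <;> linarith

lemma factor_bound {e m a b r : ℝ} (he : 0 < e) (hm : 1 ≤ m) (ha : m ≤ a) (hb : m ≤ b)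
    (habr : |a - b| ≤ r) :
    |a ^ (-e) - b ^ (-e)| ≤ max 1 e * (m ^ (-e) * min 1 (r / m)) := by
  have hm0 : (0:ℝ) < m := lt_of_lt_of_le one_pos hm
  have hmnn : (0:ℝ) ≤ m ^ (-e) := Real.rpow_nonneg hm0.le _
  rcases le_or_gt m r with h | h
  · rw [min_eq_left ((one_le_div hm0).2 h)]
    calc |a ^ (-e) - b ^ (-e)| ≤ m ^ (-e) := triv_bound he hm0 ha hb
      _ = 1 * (m ^ (-e) * 1) := by ring
      _ ≤ max 1 e * (m ^ (-e) * 1) := by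
          refine mul_le_mul_of_nonneg_right (le_max_left _ _) (by rw [mul_one]; exact hmnn)
  · have hr0 : 0 ≤ r := le_trans (abs_nonneg _) habr
    rw [min_eq_right (le_of_lt ((div_lt_one hm0).2 h))]
    have hpow : m ^ (-e - 1) = m ^ (-e) * m⁻¹ := by
      rw [← Real.rpow_neg_one m, ← Real.rpow_add hm0]; ring_nf
    calc |a ^ (-e) - b ^ (-e)| ≤ e * m ^ (-e - 1) * |a - b| := mvt_bound he hm0 ha hb
      _ ≤ e * m ^ (-e - 1) * r := by
          refine mul_le_mul_of_nonneg_left habr ?_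
          positivity
      _ = e * (m ^ (-e) * (r / m)) := by rw [hpow]; ring
      _ ≤ max 1 e * (m ^ (-e) * (r / m)) := by
          refine mul_le_mul_of_nonneg_right (le_max_right _ _) ?_
          positivity


lemma auxK_nonneg {α q a r : ℝ} (ha : 0 < a) (hr : 0 ≤ r) : 0 ≤ auxK d α q a r := by
  unfold auxK
  have h1 : (0:ℝ) ≤ min 1 (r / a) := le_min one_pos.le (div_nonneg hr ha.le)
  positivity

lemma pointwise_bound {α δ γ β A q a b r : ℝ} (hδ : 0 < δ) (hγ : 0 < γ) (hβ : 0 ≤ β)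
    (hA : 0 ≤ A) (hq : q = δ + γ + 2 * β) (ha : 1 ≤ a) (hb : 1 ≤ b) (habr : |a - b| ≤ r) :
    |a ^ (-δ) - b ^ (-δ)| * |a ^ (-γ) - b ^ (-γ)| * a ^ (-β) * b ^ (-β) *
      (A * r ^ (-(d:ℝ) - α))
    ≤ A * max 1 δ * max 1 γ * (auxK d α q a r + auxK d α q b r) := by
  set m := min a b with hmdef
  have hm1 : 1 ≤ m := le_min ha hb
  have hm0 : (0:ℝ) < m := lt_of_lt_of_le one_pos hm1
  have hma : m ≤ a := min_le_left _ _
  have hmb : m ≤ b := min_le_right _ _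
  have hr0 : (0:ℝ) ≤ r := le_trans (abs_nonneg _) habr
  have h1 := factor_bound hδ hm1 hma hmb habr
  have h2 := factor_bound hγ hm1 hma hmb habr
  have h3 : a ^ (-β) ≤ m ^ (-β) := Real.rpow_le_rpow_of_nonpos hm0 hma (by linarith)
  have h4 : b ^ (-β) ≤ m ^ (-β) := Real.rpow_le_rpow_of_nonpos hm0 hmb (by linarith)
  have hZ : (0:ℝ) ≤ A * r ^ (-(d:ℝ) - α) := by positivity
  have hminnn : (0:ℝ) ≤ min 1 (r / m) := le_min one_pos.le (div_nonneg hr0 hm0.le)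
  have step1 : |a ^ (-δ) - b ^ (-δ)| * |a ^ (-γ) - b ^ (-γ)| * a ^ (-β) * b ^ (-β) *
      (A * r ^ (-(d:ℝ) - α))
      ≤ (max 1 δ * (m ^ (-δ) * min 1 (r / m))) * (max 1 γ * (m ^ (-γ) * min 1 (r / m))) *
        m ^ (-β) * m ^ (-β) * (A * r ^ (-(d:ℝ) - α)) := by
    have ha0 : (0:ℝ) < a := lt_of_lt_of_le one_pos ha
    have hb0 : (0:ℝ) < b := lt_of_lt_of_le one_pos hb
    gcongr <;>
      first
        | exact h1 | exact h2 | exact h3 | exact h4 | positivity | exact abs_nonneg _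
  have hpow : m ^ (-δ) * m ^ (-γ) * m ^ (-β) * m ^ (-β) = m ^ (-q) := by
    rw [← Real.rpow_add hm0, ← Real.rpow_add hm0, ← Real.rpow_add hm0, hq]
    ring_nf
  have hmin2 : min 1 (r / m) * min 1 (r / m) = min 1 (r / m) ^ (2:ℝ) := by
    rw [show ((2:ℝ)) = ((2:ℕ):ℝ) by norm_num, Real.rpow_natCast]
    ring
  have step2 : (max 1 δ * (m ^ (-δ) * min 1 (r / m))) * (max 1 γ * (m ^ (-γ) * min 1 (r / m))) *
        m ^ (-β) * m ^ (-β) * (A * r ^ (-(d:ℝ) - α))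
      = A * max 1 δ * max 1 γ * auxK d α q m r := by
    unfold auxK
    rw [← hpow, ← hmin2]
    ring
  have step3 : auxK d α q m r ≤ auxK d α q a r + auxK d α q b r := by
    rcases min_choice a b with h | h
    · rw [hmdef, h]
      have : (0:ℝ) ≤ auxK d α q b r := auxK_nonneg (lt_of_lt_of_le one_pos hb) hr0
      linarith
    · rw [hmdef, h]
      have : (0:ℝ) ≤ auxK d α q a r := auxK_nonneg (lt_of_lt_of_le one_pos ha) hr0
      linarith
  calc |a ^ (-δ) - b ^ (-δ)| * |a ^ (-γ) - b ^ (-γ)| * a ^ (-β) * b ^ (-β) *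
      (A * r ^ (-(d:ℝ) - α)) ≤ _ := step1
    _ = A * max 1 δ * max 1 γ * auxK d α q m r := step2
    _ ≤ A * max 1 δ * max 1 γ * (auxK d α q a r + auxK d α q b r) := by
        refine mul_le_mul_of_nonneg_left step3 ?_
        positivity

lemma auxK_eq {α q R : ℝ} (hR : 0 < R) (z : EuclideanSpace ℝ (Fin d)) :
    auxK d α q R ‖z‖ = R ^ (-q - (d:ℝ) - α) * Hf d α (R⁻¹ • z) := by
  have hnorm : ‖R⁻¹ • z‖ = R⁻¹ * ‖z‖ := by
    rw [norm_smul, Real.norm_eq_abs, abs_of_pos (inv_pos.mpr hR)]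
  unfold auxK Hf
  rw [hnorm]
  have h1 : (R⁻¹ * ‖z‖) ^ (-(d:ℝ) - α) = R⁻¹ ^ (-(d:ℝ) - α) * ‖z‖ ^ (-(d:ℝ) - α) :=
    Real.mul_rpow (inv_nonneg.mpr hR.le) (norm_nonneg z)
  have h2 : R⁻¹ ^ (-(d:ℝ) - α) = R ^ ((d:ℝ) + α) := by
    rw [Real.inv_rpow hR.le, ← Real.rpow_neg hR.le]
    ring_nf
  have h3 : R ^ (-q - (d:ℝ) - α) * R ^ ((d:ℝ) + α) = R ^ (-q) := by
    rw [← Real.rpow_add hR]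
    ring_nf
  rw [div_eq_inv_mul, h1, h2, ← h3]
  ring


lemma lintegral_scale {R : ℝ} (hR : 0 < R) (H : EuclideanSpace ℝ (Fin d) → ℝ≥0∞)
    (hH : Measurable H) :
    ∫⁻ z : EuclideanSpace ℝ (Fin d), H (R⁻¹ • z) = ENNReal.ofReal (R ^ d) * ∫⁻ w, H w := by
  have hca : (fun z : EuclideanSpace ℝ (Fin d) => H (R⁻¹ • z))
      = fun z => H ((fun w : EuclideanSpace ℝ (Fin d) => R⁻¹ • w) z) := rfl
  rw [hca, ← lintegral_map hH (measurable_const_smul R⁻¹),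
    Measure.map_addHaar_smul volume (inv_ne_zero (ne_of_gt hR)), lintegral_smul_measure]
  congr 1
  rw [finrank_euclideanSpace, Fintype.card_fin, inv_pow, inv_inv,
    abs_of_pos (pow_pos hR d)]

/-- Inner integral estimate. -/
lemma inner_est (hd : 0 < d) {α q : ℝ} (hα0 : 0 < α) (hα2 : α < 2)
    {x : EuclideanSpace ℝ (Fin d)} (hx : 1 ≤ ‖x‖) :
    ∫⁻ y : EuclideanSpace ℝ (Fin d), ENNReal.ofReal (auxK d α q ‖x‖ ‖x - y‖)
      ≤ ENNReal.ofReal (‖x‖ ^ (-q - α)) *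
        ∫⁻ w : EuclideanSpace ℝ (Fin d), ENNReal.ofReal (Hf d α w) := by
  have hR : (0:ℝ) < ‖x‖ := lt_of_lt_of_le one_pos hx
  have step0 : ∀ y : EuclideanSpace ℝ (Fin d),
      ENNReal.ofReal (auxK d α q ‖x‖ ‖x - y‖)
      = (fun z => ENNReal.ofReal (auxK d α q ‖x‖ ‖z‖)) (y + (-x)) := by
    intro y
    simp only
    rw [show y + (-x) = -(x - y) by abel, norm_neg]
  calc ∫⁻ y : EuclideanSpace ℝ (Fin d), ENNReal.ofReal (auxK d α q ‖x‖ ‖x - y‖)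
      = ∫⁻ z : EuclideanSpace ℝ (Fin d), ENNReal.ofReal (auxK d α q ‖x‖ ‖z‖) := by
        simp_rw [step0]
        exact lintegral_add_right_eq_self (μ := (volume : Measure (EuclideanSpace ℝ (Fin d))))
          (fun z => ENNReal.ofReal (auxK d α q ‖x‖ ‖z‖)) (-x)
    _ = ∫⁻ z : EuclideanSpace ℝ (Fin d),
        ENNReal.ofReal (‖x‖ ^ (-q - (d:ℝ) - α)) * ENNReal.ofReal (Hf d α (‖x‖⁻¹ • z)) := by
        refine lintegral_congr fun z => ?_
        rw [auxK_eq hR z, ENNReal.ofReal_mul (Real.rpow_nonneg hR.le _)]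
    _ = ENNReal.ofReal (‖x‖ ^ (-q - (d:ℝ) - α)) *
        ∫⁻ z : EuclideanSpace ℝ (Fin d), ENNReal.ofReal (Hf d α (‖x‖⁻¹ • z)) :=
        lintegral_const_mul _ ((measurable_Hf.comp (measurable_const_smul _)).ennreal_ofReal)
    _ = ENNReal.ofReal (‖x‖ ^ (-q - (d:ℝ) - α)) * (ENNReal.ofReal (‖x‖ ^ d) *
        ∫⁻ w : EuclideanSpace ℝ (Fin d), ENNReal.ofReal (Hf d α w)) := by
        rw [lintegral_scale hR _ measurable_Hf.ennreal_ofReal]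
    _ = ENNReal.ofReal (‖x‖ ^ (-q - α)) *
        ∫⁻ w : EuclideanSpace ℝ (Fin d), ENNReal.ofReal (Hf d α w) := by
        rw [← mul_assoc, ← ENNReal.ofReal_mul (Real.rpow_nonneg hR.le _)]
        congr 2
        rw [← Real.rpow_natCast ‖x‖ d, ← Real.rpow_add hR]
        congr 1
        ring
    _ ≤ ENNReal.ofReal (‖x‖ ^ (-q - α)) *
        ∫⁻ w : EuclideanSpace ℝ (Fin d), ENNReal.ofReal (Hf d α w) := le_rfl


end AuxHardy

set_option maxHeartbeats 1000000 in
open AuxHardy Set Metric in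
/-- Finiteness of the auxiliary double integral over `{|x| ≥ 1} × {|y| ≥ 1}`. -/
theorem aux_integral_finite (d : ℕ) (α p β μ : ℝ)
    (hα0 : 0 < α) (hαd : α < d) (hα2 : α < 2) (hp : 2 < p)
    (hβ : 0 ≤ β) (hμ : max β (((d : ℝ) - α) / p) < μ) :
    (∫⁻ x in {x : EuclideanSpace ℝ (Fin d) | 1 ≤ ‖x‖},
      ∫⁻ y in {y : EuclideanSpace ℝ (Fin d) | 1 ≤ ‖y‖},
        ENNReal.ofReal (|‖x‖ ^ (β - μ) - ‖y‖ ^ (β - μ)| *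
          |‖x‖ ^ (β - (p - 1) * μ) - ‖y‖ ^ (β - (p - 1) * μ)| *
          ‖x‖ ^ (-β) * ‖y‖ ^ (-β) * nuK d α x y)) < ⊤ := by

  have hd : 0 < d := by
    have : (0:ℝ) < (d:ℝ) := lt_trans hα0 hαd
    exact_mod_cast this
  set S : Set (EuclideanSpace ℝ (Fin d)) := {x | 1 ≤ ‖x‖} with hS
  have hβμ : β < μ := lt_of_le_of_lt (le_max_left _ _) hμ
  have hp0 : (0:ℝ) < p := by linarith
  have hdα : ((d:ℝ) - α) / p < μ := lt_of_le_of_lt (le_max_right _ _) hμ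
  have hμ0 : 0 < μ := by
    have h1 : (0:ℝ) ≤ ((d:ℝ) - α) / p := div_nonneg (by linarith) hp0.le
    linarith
  set δ := μ - β with hδdef
  set γ := (p - 1) * μ - β with hγdef
  have hδ : 0 < δ := by rw [hδdef]; linarith
  have hγ : 0 < γ := by
    rw [hγdef]
    nlinarith [mul_nonneg (by linarith : (0:ℝ) ≤ p - 2) hμ0.le]
  set q := p * μ with hqdef
  have hq_eq : q = δ + γ + 2 * β := by rw [hqdef, hδdef, hγdef]; ring
  have hqα : (d:ℝ) < q + α := by
    rw [hqdef]
    have := (div_lt_iff₀ hp0).mp hdα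
    linarith
  set A := coefA d α with hAdef
  have hA0 : 0 ≤ A := by
    rw [hAdef, coefA]
    have hΓ : 0 < Real.Gamma (((d : ℝ) + α) / 2) :=
      Real.Gamma_pos_of_pos (by positivity)
    have h2 : (0:ℝ) ≤ (2:ℝ) ^ α := Real.rpow_nonneg (by norm_num) _
    have h3 : (0:ℝ) ≤ Real.pi ^ (-(d:ℝ) / 2) := Real.rpow_nonneg Real.pi_pos.le _
    exact div_nonneg (by positivity) (abs_nonneg _)
  set C₀ := A * max 1 δ * max 1 γ with hC₀def
  have hC₀0 : 0 ≤ C₀ := by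
    rw [hC₀def]
    positivity
  set I := ∫⁻ w : EuclideanSpace ℝ (Fin d), ENNReal.ofReal (Hf d α w) with hIdef
  have hIlt : I < ⊤ := radial_lt_top hd hα0 hα2
  set F : EuclideanSpace ℝ (Fin d) → EuclideanSpace ℝ (Fin d) → ℝ≥0∞ :=
    fun x y => ENNReal.ofReal (C₀ * auxK d α q ‖x‖ ‖x - y‖) with hFdef
  have hFm1 : ∀ x, Measurable (F x) := by
    intro x
    simp only [hFdef, auxK]
    fun_prop
  have hFm2 : ∀ y, Measurable (fun x => F x y) := by
    intro y
    simp only [hFdef, auxK]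
    fun_prop
  have hM3 : Measurable (fun z : EuclideanSpace ℝ (Fin d) × EuclideanSpace ℝ (Fin d) =>
      F z.1 z.2 + F z.2 z.1) := by
    simp only [hFdef, auxK]
    fun_prop
  have hM4 : Measurable (fun z : EuclideanSpace ℝ (Fin d) × EuclideanSpace ℝ (Fin d) =>
      F z.1 z.2) := by
    simp only [hFdef, auxK]
    fun_prop
  have hM5 : Measurable (Function.uncurry
      (fun x y : EuclideanSpace ℝ (Fin d) => F y x)) := by
    simp only [hFdef, auxK, Function.uncurry]
    fun_prop
  have hSmeas : MeasurableSet S := by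
    rw [hS, setEq]
    exact measurableSet_ball.compl
  -- pointwise bound
  have hpt : ∀ x ∈ S, ∀ y ∈ S,
      ENNReal.ofReal (|‖x‖ ^ (β - μ) - ‖y‖ ^ (β - μ)| *
        |‖x‖ ^ (β - (p - 1) * μ) - ‖y‖ ^ (β - (p - 1) * μ)| *
        ‖x‖ ^ (-β) * ‖y‖ ^ (-β) * nuK d α x y) ≤ F x y + F y x := by
    intro x hx y hy
    have hx1 : (1:ℝ) ≤ ‖x‖ := hx
    have hy1 : (1:ℝ) ≤ ‖y‖ := hy
    have e1 : β - μ = -δ := by rw [hδdef]; ring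
    have e2 : β - (p - 1) * μ = -γ := by rw [hγdef]; ring
    have e3 : nuK d α x y = A * ‖x - y‖ ^ (-(d:ℝ) - α) := rfl
    rw [e1, e2, e3]
    have hbd := pointwise_bound (d := d) (α := α) hδ hγ hβ hA0 hq_eq hx1 hy1
      (abs_norm_sub_norm_le x y)
    calc ENNReal.ofReal (|‖x‖ ^ (-δ) - ‖y‖ ^ (-δ)| * |‖x‖ ^ (-γ) - ‖y‖ ^ (-γ)| *
          ‖x‖ ^ (-β) * ‖y‖ ^ (-β) * (A * ‖x - y‖ ^ (-(d:ℝ) - α)))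
        ≤ ENNReal.ofReal (A * max 1 δ * max 1 γ *
            (auxK d α q ‖x‖ ‖x - y‖ + auxK d α q ‖y‖ ‖x - y‖)) :=
          ENNReal.ofReal_le_ofReal hbd
      _ = ENNReal.ofReal (C₀ * auxK d α q ‖x‖ ‖x - y‖ + C₀ * auxK d α q ‖y‖ ‖x - y‖) := by
          rw [hC₀def]; ring_nf
      _ ≤ ENNReal.ofReal (C₀ * auxK d α q ‖x‖ ‖x - y‖) +
          ENNReal.ofReal (C₀ * auxK d α q ‖y‖ ‖x - y‖) := ENNReal.ofReal_add_le
      _ = F x y + F y x := by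
          rw [hFdef]
          simp only
          rw [norm_sub_rev y x]
  -- chain
  calc (∫⁻ x in S, ∫⁻ y in S,
        ENNReal.ofReal (|‖x‖ ^ (β - μ) - ‖y‖ ^ (β - μ)| *
          |‖x‖ ^ (β - (p - 1) * μ) - ‖y‖ ^ (β - (p - 1) * μ)| *
          ‖x‖ ^ (-β) * ‖y‖ ^ (-β) * nuK d α x y))
      ≤ ∫⁻ x in S, ∫⁻ y in S, (F x y + F y x) := by
        refine setLIntegral_mono ?_ fun x hx => ?_
        · exact Measurable.lintegral_prod_right' hM3
        · exact setLIntegral_mono ((hFm1 x).add (hFm2 x))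
            fun y hy => hpt x hx y hy
    _ = ∫⁻ x in S, ((∫⁻ y in S, F x y) + ∫⁻ y in S, F y x) := by
        exact lintegral_congr fun x => lintegral_add_left (hFm1 x) _
    _ = (∫⁻ x in S, ∫⁻ y in S, F x y) + ∫⁻ x in S, ∫⁻ y in S, F y x :=
        lintegral_add_left (Measurable.lintegral_prod_right' hM4) _
    _ = (∫⁻ x in S, ∫⁻ y in S, F x y) + ∫⁻ y in S, ∫⁻ x in S, F y x := by
        congr 1
        exact lintegral_lintegral_swap hM5.aemeasurable
    _ = 2 * ∫⁻ x in S, ∫⁻ y in S, F x y := by rw [two_mul]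
    _ ≤ 2 * ∫⁻ x in S, (ENNReal.ofReal C₀ * (ENNReal.ofReal (‖x‖ ^ (-q - α)) * I)) := by
        refine mul_le_mul_right (setLIntegral_mono (by fun_prop) fun x hx => ?_) 2
        have hx1 : (1:ℝ) ≤ ‖x‖ := hx
        calc ∫⁻ y in S, F x y ≤ ∫⁻ y, F x y := setLIntegral_le_lintegral _ _
          _ = ENNReal.ofReal C₀ *
              ∫⁻ y, ENNReal.ofReal (auxK d α q ‖x‖ ‖x - y‖) := by
              rw [← lintegral_const_mul _ (show Measurable fun y =>
                ENNReal.ofReal (auxK d α q ‖x‖ ‖x - y‖) by simp only [auxK]; fun_prop)]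
              refine lintegral_congr fun y => ?_
              rw [hFdef]
              simp only
              rw [ENNReal.ofReal_mul hC₀0]
          _ ≤ ENNReal.ofReal C₀ * (ENNReal.ofReal (‖x‖ ^ (-q - α)) * I) :=
              mul_le_mul_right (inner_est hd hα0 hα2 hx1) _
    _ = 2 * (ENNReal.ofReal C₀ * I * ∫⁻ x in S, ENNReal.ofReal (‖x‖ ^ (-q - α))) := by
        congr 1
        rw [← lintegral_const_mul _ (by fun_prop)]
        exact lintegral_congr fun x => by ring
    _ < ⊤ := by
        refine ENNReal.mul_lt_top (by norm_num) ?_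
        refine ENNReal.mul_lt_top (ENNReal.mul_lt_top ENNReal.ofReal_lt_top hIlt) ?_
        rw [hS, setEq]
        exact far hd (by linarith)
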